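/- If λ is a paravector (i.e., λ = λ_0 + λ_1 e_1 + ⋯ + λ_n e_n with real coefficients) and μ ∈ C(V_n) is arbitrary, then |λμ| = |μλ| = |λ| |μ|. -/

import Mathlib

open Finset Filter

/-- The concrete model of the real Clifford algebra `C(V_n)`:
coefficient functions on the basis `{e_A : A ⊆ {1,…,n}}`. -/
abbrev Cl (n : ℕ) : Type := Finset (Fin n) → ℝ

/-- The sign in `e_A e_B = sgn A B • e_{A Δ B}`. -/
def sgn {n : ℕ} (A B : Finset (Fin n)) : ℝ :=
  (-1 : ℝ) ^ (A ∩ B).card *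
    (-1 : ℝ) ^ (∑ j ∈ B, (A.filter (fun i => j < i)).card)

/-- The Clifford product on `C(V_n)`, determined by `e_i² = -1` and
anticommuting generators. -/
def cmul {n : ℕ} (x y : Cl n) : Cl n := fun C =>
  ∑ A : Finset (Fin n), ∑ B : Finset (Fin n),
    if symmDiff A B = C then sgn A B * x A * y B else 0

/-- The basis element `e_A`. -/
def eA {n : ℕ} (A : Finset (Fin n)) : Cl n := fun B => if B = A then 1 else 0

/-- The identity `e_∅ = 1`. -/
def oneC {n : ℕ} : Cl n := eA ∅

/-- The Euclidean norm `|λ| = (Σ_A λ_A²)^(1/2)` on coefficients. -/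
noncomputable def cnorm {n : ℕ} (x : Cl n) : ℝ := Real.sqrt (∑ A, x A ^ 2)

/-- A paravector: an element of `span{1, e_1, …, e_n}`. -/
def IsParavector {n : ℕ} (x : Cl n) : Prop :=
  ∀ A : Finset (Fin n), 1 < A.card → x A = 0

/-- Membership in the subalgebra `C(V_{n-1})` of `C(V_n)` (here `C(V_n)` is
modelled as `Cl (n+1)` and the distinguished last generator is `e_n`,
indexed by `Fin.last n`). -/
def inLower {n : ℕ} (x : Cl (n+1)) : Prop :=
  ∀ A : Finset (Fin (n+1)), Fin.last n ∈ A → x A = 0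

/-- The distinguished last generator `e_n`. -/
def en {n : ℕ} : Cl (n+1) := eA {Fin.last n}

/-- Clifford conjugation `ē_A = (-1)^{#A(#A+1)/2} e_A`, extended linearly. -/
def conjC {n : ℕ} (x : Cl n) : Cl n :=
  fun A => (-1 : ℝ) ^ (A.card * (A.card + 1) / 2) * x A

/-- The reflection operator `λ ↦ λ*`: the algebra automorphism fixing
`e_1,…,e_{n-1}` and sending `e_n ↦ -e_n`; on coefficients it negates the
components of basis elements containing `e_n`. -/
def starC {n : ℕ} (x : Cl (n+1)) : Cl (n+1) :=
  fun A => if Fin.last n ∈ A then -x A else x A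

/-- The real part `Re(λ)`: the `C(V_{n-1})`-component in `λ = Re(λ) + e_n Im^l(λ)`. -/
def ReC {n : ℕ} (x : Cl (n+1)) : Cl (n+1) :=
  fun A => if Fin.last n ∈ A then 0 else x A

/-- The paravector `W = Σ_{i=0}^{n} w_i e_i` associated to `w ∈ ℝ^{n+1}`
(here with `n+1` generators, so `w ∈ ℝ^{n+2}`). -/
noncomputable def pv {n : ℕ} (w : Fin (n+2) → ℝ) : Cl (n+1) :=
  w 0 • eA (∅ : Finset (Fin (n+1))) + ∑ i : Fin (n+1), w i.succ • eA {i}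

/-- The Clifford units `e_0 = 1, e_1, …, e_{n+1}`. -/
def unit {n : ℕ} (k : Fin (n+2)) : Cl (n+1) :=
  Fin.cases (eA ∅) (fun i => eA {i}) k

/-- Partial derivative `∂f/∂w_k` of a Clifford-valued function. -/
noncomputable def pderiv {n : ℕ} (f : (Fin (n+2) → ℝ) → Cl (n+1))
    (k : Fin (n+2)) (w : Fin (n+2) → ℝ) : Cl (n+1) :=
  fderiv ℝ f w (Pi.single k 1)

/-- The left Dirac operator `D[f] = Σ_k e_k ∂f/∂w_k`. -/
noncomputable def DiracL {n : ℕ} (f : (Fin (n+2) → ℝ) → Cl (n+1))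
    (w : Fin (n+2) → ℝ) : Cl (n+1) :=
  ∑ k : Fin (n+2), cmul (unit k) (pderiv f k w)

/-- The right Dirac operator `[f]D = Σ_k (∂f/∂w_k) e_k`. -/
noncomputable def DiracR {n : ℕ} (f : (Fin (n+2) → ℝ) → Cl (n+1))
    (w : Fin (n+2) → ℝ) : Cl (n+1) :=
  ∑ k : Fin (n+2), cmul (pderiv f k w) (unit k)

/-- `∂[f]/∂x = Σ_{j<last} e_j ∂f/∂w_j` (left action). -/
noncomputable def Dx {n : ℕ} (f : (Fin (n+2) → ℝ) → Cl (n+1))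
    (w : Fin (n+2) → ℝ) : Cl (n+1) :=
  ∑ k : Fin (n+2), if k = Fin.last (n+1) then 0 else cmul (unit k) (pderiv f k w)

/-- `∂f/∂y`: the derivative in the last coordinate. -/
noncomputable def Dy {n : ℕ} (f : (Fin (n+2) → ℝ) → Cl (n+1))
    (w : Fin (n+2) → ℝ) : Cl (n+1) :=
  pderiv f (Fin.last (n+1)) w

/-- The upper half-space `ℝ^{n+1}_+`. -/
def upper (n : ℕ) : Set (Fin (n+2) → ℝ) := {w | 0 < w (Fin.last (n+1))}

/-- The lower half-space `ℝ^{n+1}_-`. -/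
def lower (n : ℕ) : Set (Fin (n+2) → ℝ) := {w | w (Fin.last (n+1)) < 0}

/-- The boundary hyperplane `ℝ^{n+1}_0`. -/
def hyper (n : ℕ) : Set (Fin (n+2) → ℝ) := {w | w (Fin.last (n+1)) = 0}

/-- The point reflection `w ↦ w*` flipping the sign of the last coordinate. -/
def reflPt {n : ℕ} (w : Fin (n+2) → ℝ) : Fin (n+2) → ℝ :=
  Function.update w (Fin.last (n+1)) (-(w (Fin.last (n+1))))

/-- The Euclidean norm on `ℝ^{n+2}`. -/
noncomputable def enorm {n : ℕ} (w : Fin (n+2) → ℝ) : ℝ :=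
  Real.sqrt (∑ i, w i ^ 2)

/-- The Cauchy kernel `E(w) = w̄ / |w|^{n+1}` (with `n+1` generators). -/
noncomputable def Ek {n : ℕ} (w : Fin (n+2) → ℝ) : Cl (n+1) :=
  (_root_.enorm w ^ (n+2))⁻¹ • conjC (pv w)

lemma neg_one_sq_pow (m : ℕ) : (-1 : ℝ)^m * (-1)^m = 1 := by
  rw [← pow_add]; exact Even.neg_one_pow ⟨m, rfl⟩

lemma sgn_sq {n} (A B : Finset (Fin n)) : sgn A B * sgn A B = 1 := by
  unfold sgn
  calc ((-1:ℝ)^(A ∩ B).card * (-1)^(∑ j ∈ B, (A.filter (fun i => j < i)).card)) *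
      ((-1:ℝ)^(A ∩ B).card * (-1)^(∑ j ∈ B, (A.filter (fun i => j < i)).card))
      = ((-1:ℝ)^(A ∩ B).card * (-1)^(A ∩ B).card) *
        ((-1:ℝ)^(∑ j ∈ B, (A.filter (fun i => j < i)).card) *
         (-1)^(∑ j ∈ B, (A.filter (fun i => j < i)).card)) := by ring
    _ = 1 := by rw [neg_one_sq_pow, neg_one_sq_pow, one_mul]

lemma sgn_empty {n} (B : Finset (Fin n)) : sgn ∅ B = 1 := by simp [sgn]

lemma sgn_empty' {n} (B : Finset (Fin n)) : sgn B ∅ = 1 := by simp [sgn]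

lemma sgn_singleton {n} (i : Fin n) (B : Finset (Fin n)) :
    sgn {i} B = (if i ∈ B then -1 else 1) * (-1 : ℝ)^((B.filter (· < i)).card) := by
  unfold sgn
  rw [Finset.singleton_inter]
  congr 1
  · split <;> simp
  · congr 1
    calc ∑ j ∈ B, (({i} : Finset (Fin n)).filter (fun x => j < x)).card
        = ∑ j ∈ B, (if j < i then 1 else 0) := by
          refine Finset.sum_congr rfl fun j _ => ?_
          rw [Finset.filter_singleton]; split <;> simp
      _ = (B.filter (· < i)).card := by simp [Finset.sum_ite, Finset.sum_const]

lemma sgn_singleton' {n} (i : Fin n) (B : Finset (Fin n)) :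
    sgn B {i} = (if i ∈ B then -1 else 1) * (-1 : ℝ)^((B.filter (i < ·)).card) := by
  unfold sgn
  rw [Finset.inter_comm, Finset.singleton_inter]
  simp only [Finset.sum_singleton]
  congr 1
  split <;> simp

lemma symmDiff_single {n} (k : Fin n) (B : Finset (Fin n)) :
    symmDiff B {k} = if k ∈ B then B.erase k else insert k B := by
  split <;> (ext a; by_cases h : a = k <;> simp [Finset.mem_symmDiff, *])

lemma parity_filter_toggle {n} (k : Fin n) (B : Finset (Fin n)) (p : Fin n → Prop)
    [DecidablePred p] :
    (-1:ℝ)^(((symmDiff B {k}).filter p).card)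
      = (if p k then -1 else 1) * (-1)^((B.filter p).card) := by
  rw [symmDiff_single]
  by_cases hk : k ∈ B
  · simp only [hk, if_true]
    rw [Finset.filter_erase]
    by_cases hp : p k
    · have hkf : k ∈ B.filter p := Finset.mem_filter.2 ⟨hk, hp⟩
      have h1 : 1 ≤ (B.filter p).card := Finset.card_pos.2 ⟨k, hkf⟩
      rw [Finset.card_erase_of_mem hkf, if_pos hp]
      obtain ⟨m, hm⟩ : ∃ m, (B.filter p).card = m + 1 := ⟨_, (Nat.succ_pred_eq_of_pos h1).symm⟩
      rw [hm]; simp [pow_succ]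
    · rw [Finset.erase_eq_of_notMem (fun h => hp (Finset.mem_filter.1 h).2), if_neg hp, one_mul]
  · simp only [hk, if_false]
    rw [Finset.filter_insert]
    by_cases hp : p k
    · rw [if_pos hp, if_pos hp,
        Finset.card_insert_of_notMem (fun h => hk (Finset.mem_filter.1 h).1)]
      simp [pow_succ, mul_comm]
    · rw [if_neg hp, if_neg hp, one_mul]

lemma mem_symmDiff_single {n} (i k : Fin n) (B : Finset (Fin n)) :
    i ∈ symmDiff B {k} ↔ (if i = k then i ∉ B else i ∈ B) := by
  by_cases h : i = k <;> simp [Finset.mem_symmDiff, h]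

lemma toggle_self {n} (i : Fin n) (B : Finset (Fin n)) :
    sgn {i} (symmDiff B {i}) = - sgn {i} B := by
  rw [sgn_singleton, sgn_singleton, parity_filter_toggle]
  by_cases h : i ∈ B <;> simp [mem_symmDiff_single, h] <;> ring

lemma toggle_other {n} (i k : Fin n) (hik : i ≠ k) (B : Finset (Fin n)) :
    sgn {i} (symmDiff B {k}) = (if k < i then -1 else 1) * sgn {i} B := by
  rw [sgn_singleton, sgn_singleton, parity_filter_toggle]
  by_cases h : i ∈ B <;> by_cases hk : k < i <;> simp [mem_symmDiff_single, h, hik, hk] <;> ring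

lemma toggle_self' {n} (i : Fin n) (B : Finset (Fin n)) :
    sgn (symmDiff B {i}) {i} = - sgn B {i} := by
  rw [sgn_singleton', sgn_singleton', parity_filter_toggle]
  by_cases h : i ∈ B <;> simp [mem_symmDiff_single, h] <;> ring

lemma toggle_other' {n} (i k : Fin n) (hik : i ≠ k) (B : Finset (Fin n)) :
    sgn (symmDiff B {k}) {i} = (if i < k then -1 else 1) * sgn B {i} := by
  rw [sgn_singleton', sgn_singleton', parity_filter_toggle]
  by_cases h : i ∈ B <;> by_cases hk : i < k <;> simp [mem_symmDiff_single, h, hik, hk] <;> ring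

lemma small_cases {n} (A : Finset (Fin n)) (h : A.card ≤ 1) : A = ∅ ∨ ∃ i, A = {i} := by
  rcases Nat.le_one_iff_eq_zero_or_eq_one.1 h with h | h
  · exact Or.inl (Finset.card_eq_zero.1 h)
  · exact Or.inr (Finset.card_eq_one.1 h)

lemma sd_empty {n} (B : Finset (Fin n)) : symmDiff B ∅ = B := by
  simpa using symmDiff_bot B

lemma key_left {n} (A A' B : Finset (Fin n)) (hA : A.card ≤ 1) (hA' : A'.card ≤ 1)
    (hne : A ≠ A') :
    sgn A B * sgn A' (symmDiff (symmDiff B A) A')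
      + sgn A (symmDiff (symmDiff B A) A') * sgn A' B = 0 := by
  rcases small_cases A hA with rfl | ⟨i, rfl⟩ <;> rcases small_cases A' hA' with rfl | ⟨k, rfl⟩
  · exact absurd rfl hne
  · rw [sd_empty, sgn_empty, sgn_empty, toggle_self]; ring
  · rw [sd_empty, sgn_empty, sgn_empty, toggle_self]; ring
  · have hik : i ≠ k := fun h => hne (by rw [h])
    rw [toggle_self, toggle_other i k hik, toggle_self, toggle_other k i hik.symm]
    rcases lt_or_gt_of_ne hik with h | h
    · rw [if_neg (asymm h), if_pos h]; ring
    · rw [if_pos h, if_neg (asymm h)]; ring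

lemma key_right {n} (A A' B : Finset (Fin n)) (hA : A.card ≤ 1) (hA' : A'.card ≤ 1)
    (hne : A ≠ A') :
    sgn B A * sgn (symmDiff (symmDiff B A) A') A'
      + sgn (symmDiff (symmDiff B A) A') A * sgn B A' = 0 := by
  rcases small_cases A hA with rfl | ⟨i, rfl⟩ <;> rcases small_cases A' hA' with rfl | ⟨k, rfl⟩
  · exact absurd rfl hne
  · rw [sd_empty, sgn_empty', sgn_empty', toggle_self']; ring
  · rw [sd_empty, sgn_empty', sgn_empty', toggle_self']; ring
  · have hik : i ≠ k := fun h => hne (by rw [h])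
    rw [toggle_self', toggle_other' i k hik, toggle_self', toggle_other' k i hik.symm]
    rcases lt_or_gt_of_ne hik with h | h
    · rw [if_pos h, if_neg (asymm h)]; ring
    · rw [if_neg (asymm h), if_pos h]; ring



lemma cmul_apply {n} (x y : Cl n) (C : Finset (Fin n)) :
    cmul x y C = ∑ A, sgn A (symmDiff A C) * x A * y (symmDiff A C) := by
  unfold cmul
  refine Finset.sum_congr rfl fun A _ => ?_
  have h : ∀ B : Finset (Fin n), (symmDiff A B = C) ↔ (B = symmDiff A C) := by
    intro B
    constructor
    · rintro rfl; rw [symmDiff_symmDiff_cancel_left]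
    · rintro rfl; rw [symmDiff_symmDiff_cancel_left]
  simp_rw [h]
  rw [Finset.sum_ite_eq' Finset.univ (symmDiff A C) (fun B => sgn A B * x A * y B)]
  simp

lemma cmul_apply' {n} (x y : Cl n) (C : Finset (Fin n)) :
    cmul y x C = ∑ A, sgn (symmDiff A C) A * x A * y (symmDiff A C) := by
  unfold cmul
  rw [Finset.sum_comm]
  refine Finset.sum_congr rfl fun A _ => ?_
  have h : ∀ B : Finset (Fin n), (symmDiff B A = C) ↔ (B = symmDiff A C) := by
    intro B
    constructor <;> rintro rfl <;> (ext a; simp only [Finset.mem_symmDiff]; tauto)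
  simp_rw [h]
  rw [Finset.sum_ite_eq' Finset.univ (symmDiff A C) (fun B => sgn B A * y B * x A)]
  simp [mul_comm, mul_assoc, mul_left_comm]

lemma sd_h1 {n} (A A' C : Finset (Fin n)) :
    symmDiff A (symmDiff (symmDiff C A) A') = symmDiff A' C := by
  ext a; simp only [Finset.mem_symmDiff]; tauto

lemma sd_h2 {n} (A A' C : Finset (Fin n)) :
    symmDiff A' (symmDiff (symmDiff C A) A') = symmDiff A C := by
  ext a; simp only [Finset.mem_symmDiff]; tauto

lemma sd_h3 {n} (A A' C : Finset (Fin n)) :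
    symmDiff (symmDiff (symmDiff A C) A) A' = symmDiff A' C := by
  ext a; simp only [Finset.mem_symmDiff]; tauto

lemma sd_h4 {n} (A A' C : Finset (Fin n)) :
    symmDiff (symmDiff (symmDiff (symmDiff C A) A') A) A' = C := by
  ext a; simp only [Finset.mem_symmDiff]; tauto

lemma sd_fixed {n} (A A' C : Finset (Fin n)) (h : symmDiff (symmDiff C A) A' = C) :
    A = A' := by
  ext a
  have := Finset.ext_iff.1 h a
  simp only [Finset.mem_symmDiff] at this
  tauto

lemma cross_left {n} (x y : Cl n) (hx : ∀ A : Finset (Fin n), 1 < A.card → x A = 0)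
    (A A' : Finset (Fin n)) (hne : A' ≠ A) :
    ∑ C, (sgn A (symmDiff A C) * x A * y (symmDiff A C)) *
      (sgn A' (symmDiff A' C) * x A' * y (symmDiff A' C)) = 0 := by
  by_cases hA : A.card ≤ 1
  swap
  · simp [hx A (lt_of_not_ge hA)]
  by_cases hA' : A'.card ≤ 1
  swap
  · simp [hx A' (lt_of_not_ge hA')]
  refine Finset.sum_ninvolution (fun C => symmDiff (symmDiff C A) A') ?_ ?_ (fun _ => Finset.mem_univ _) (fun C => sd_h4 A A' C)
  · intro C
    rw [sd_h1, sd_h2]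
    have hk := key_left A A' (symmDiff A C) hA hA' (fun h => hne (h.symm))
    rw [sd_h3] at hk
    linear_combination (x A * x A' * y (symmDiff A C) * y (symmDiff A' C)) * hk
  · intro C hC h
    exact hne ((sd_fixed A A' C h).symm)

lemma cross_right {n} (x y : Cl n) (hx : ∀ A : Finset (Fin n), 1 < A.card → x A = 0)
    (A A' : Finset (Fin n)) (hne : A' ≠ A) :
    ∑ C, (sgn (symmDiff A C) A * x A * y (symmDiff A C)) *
      (sgn (symmDiff A' C) A' * x A' * y (symmDiff A' C)) = 0 := by
  by_cases hA : A.card ≤ 1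
  swap
  · simp [hx A (lt_of_not_ge hA)]
  by_cases hA' : A'.card ≤ 1
  swap
  · simp [hx A' (lt_of_not_ge hA')]
  refine Finset.sum_ninvolution (fun C => symmDiff (symmDiff C A) A') ?_ ?_ (fun _ => Finset.mem_univ _) (fun C => sd_h4 A A' C)
  · intro C
    rw [sd_h1, sd_h2]
    have hk := key_right A A' (symmDiff A C) hA hA' (fun h => hne (h.symm))
    rw [sd_h3] at hk
    linear_combination (x A * x A' * y (symmDiff A C) * y (symmDiff A' C)) * hk
  · intro C hC h
    exact hne ((sd_fixed A A' C h).symm)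

lemma sd_bij {n} (A : Finset (Fin n)) : Function.Bijective (fun C => symmDiff A C) :=
  Function.Involutive.bijective (fun C => symmDiff_symmDiff_cancel_left A C)

lemma diag_left {n} (x y : Cl n) (A : Finset (Fin n)) :
    ∑ C, (sgn A (symmDiff A C) * x A * y (symmDiff A C)) *
      (sgn A (symmDiff A C) * x A * y (symmDiff A C)) = x A ^ 2 * ∑ B, y B ^ 2 := by
  have h1 : ∀ C : Finset (Fin n),
      (sgn A (symmDiff A C) * x A * y (symmDiff A C)) *
        (sgn A (symmDiff A C) * x A * y (symmDiff A C))
      = x A ^ 2 * y (symmDiff A C) ^ 2 := by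
    intro C
    have := sgn_sq A (symmDiff A C)
    nlinarith [this]
  rw [Finset.sum_congr rfl (fun C _ => h1 C), ← Finset.mul_sum]
  congr 1
  exact Fintype.sum_bijective _ (sd_bij A) _ _ (fun C => rfl)

lemma diag_right {n} (x y : Cl n) (A : Finset (Fin n)) :
    ∑ C, (sgn (symmDiff A C) A * x A * y (symmDiff A C)) *
      (sgn (symmDiff A C) A * x A * y (symmDiff A C)) = x A ^ 2 * ∑ B, y B ^ 2 := by
  have h1 : ∀ C : Finset (Fin n),
      (sgn (symmDiff A C) A * x A * y (symmDiff A C)) *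
        (sgn (symmDiff A C) A * x A * y (symmDiff A C))
      = x A ^ 2 * y (symmDiff A C) ^ 2 := by
    intro C
    have := sgn_sq (symmDiff A C) A
    nlinarith [this]
  rw [Finset.sum_congr rfl (fun C _ => h1 C), ← Finset.mul_sum]
  congr 1
  exact Fintype.sum_bijective _ (sd_bij A) _ _ (fun C => rfl)

lemma sumsq_left {n} (x y : Cl n) (hx : ∀ A : Finset (Fin n), 1 < A.card → x A = 0) :
    ∑ C, (cmul x y C) ^ 2 = (∑ A, x A ^ 2) * (∑ B, y B ^ 2) := by
  have step : ∀ C : Finset (Fin n), (cmul x y C) ^ 2 =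
      ∑ A, ∑ A', (sgn A (symmDiff A C) * x A * y (symmDiff A C)) *
        (sgn A' (symmDiff A' C) * x A' * y (symmDiff A' C)) := by
    intro C
    rw [cmul_apply, sq, Finset.sum_mul_sum]
  rw [Finset.sum_congr rfl (fun C _ => step C), Finset.sum_comm]
  rw [Finset.sum_congr rfl (fun A (_ : A ∈ Finset.univ) => Finset.sum_comm)]
  have inner : ∀ A : Finset (Fin n),
      (∑ A', ∑ C, (sgn A (symmDiff A C) * x A * y (symmDiff A C)) *
        (sgn A' (symmDiff A' C) * x A' * y (symmDiff A' C))) = x A ^ 2 * ∑ B, y B ^ 2 := by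
    intro A
    rw [Finset.sum_eq_single_of_mem A (Finset.mem_univ A)
      (fun A' _ hne => cross_left x y hx A A' hne)]
    exact diag_left x y A
  rw [Finset.sum_congr rfl (fun A _ => inner A), ← Finset.sum_mul]

lemma sumsq_right {n} (x y : Cl n) (hx : ∀ A : Finset (Fin n), 1 < A.card → x A = 0) :
    ∑ C, (cmul y x C) ^ 2 = (∑ A, x A ^ 2) * (∑ B, y B ^ 2) := by
  have step : ∀ C : Finset (Fin n), (cmul y x C) ^ 2 =
      ∑ A, ∑ A', (sgn (symmDiff A C) A * x A * y (symmDiff A C)) *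
        (sgn (symmDiff A' C) A' * x A' * y (symmDiff A' C)) := by
    intro C
    rw [cmul_apply', sq, Finset.sum_mul_sum]
  rw [Finset.sum_congr rfl (fun C _ => step C), Finset.sum_comm]
  rw [Finset.sum_congr rfl (fun A (_ : A ∈ Finset.univ) => Finset.sum_comm)]
  have inner : ∀ A : Finset (Fin n),
      (∑ A', ∑ C, (sgn (symmDiff A C) A * x A * y (symmDiff A C)) *
        (sgn (symmDiff A' C) A' * x A' * y (symmDiff A' C))) = x A ^ 2 * ∑ B, y B ^ 2 := by
    intro A
    rw [Finset.sum_eq_single_of_mem A (Finset.mem_univ A)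
      (fun A' _ hne => cross_right x y hx A A' hne)]
    exact diag_right x y A
  rw [Finset.sum_congr rfl (fun A _ => inner A), ← Finset.sum_mul]

/-- for a paravector `λ` and arbitrary `μ`, `|λμ| = |μλ| = |λ||μ|`. -/
theorem stmt_1 (n : ℕ) (x y : Cl n) (hx : IsParavector x) :
    cnorm (cmul x y) = cnorm x * cnorm y ∧ cnorm (cmul y x) = cnorm x * cnorm y := by
  have hnn : 0 ≤ ∑ A, x A ^ 2 := Finset.sum_nonneg fun A _ => sq_nonneg _
  constructor
  · rw [cnorm, sumsq_left x y hx, Real.sqrt_mul hnn]; rfl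
  · rw [cnorm, sumsq_right x y hx, Real.sqrt_mul hnn]; rfl
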